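/- For every λ > 0, the DMIM of the negative exponential density equals (1 − e^{-λ})/λ; that is, ∫_0^∞ λ·e^{-λx}·exp(−λ·e^{-λx}) dx = (1/λ)·(1 − e^{-λ}). -/

import Mathlib

open MeasureTheory Real

/-- The DMIM of the negative exponential density with rate `λ > 0` equals
`(1/λ)(1 - e^{-λ})`. -/
theorem dmim_exponential (lam : ℝ) (hlam : 0 < lam) :
    (∫ x in Set.Ioi (0 : ℝ),
        lam * Real.exp (-lam * x) * Real.exp (-(lam * Real.exp (-lam * x)))) =
      (1 / lam) * (1 - Real.exp (-lam)) := by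
  set F : ℝ → ℝ := fun x => (1 / lam) * Real.exp (-(lam * Real.exp (-lam * x))) with hF
  have hderiv : ∀ x ∈ Set.Ioi (0 : ℝ), HasDerivAt F
      (lam * Real.exp (-lam * x) * Real.exp (-(lam * Real.exp (-lam * x)))) x := by
    intro x _
    have h1 : HasDerivAt (fun x : ℝ => -lam * x) (-lam) x := by
      simpa using (hasDerivAt_id x).const_mul (-lam)
    have h2 : HasDerivAt (fun x : ℝ => -(lam * Real.exp (-lam * x)))
        (lam * lam * Real.exp (-lam * x)) x := by
      have : HasDerivAt (fun x : ℝ => -(lam * Real.exp (-lam * x)))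
          (-(lam * (Real.exp (-lam * x) * -lam))) x := ((h1.exp).const_mul lam).neg
      convert this using 1; ring
    have h3 : HasDerivAt F (1 / lam * (Real.exp (-(lam * Real.exp (-lam * x))) *
        (lam * lam * Real.exp (-lam * x)))) x := (h2.exp).const_mul (1 / lam)
    convert h3 using 1
    field_simp
  have hcont : ContinuousOn F (Set.Ici (0 : ℝ)) := by
    apply Continuous.continuousOn
    continuity
  have hnonneg : ∀ x ∈ Set.Ioi (0 : ℝ),
      0 ≤ lam * Real.exp (-lam * x) * Real.exp (-(lam * Real.exp (-lam * x))) := by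
    intro x _
    positivity
  have htend : Filter.Tendsto F Filter.atTop (nhds (1 / lam)) := by
    have h1 : Filter.Tendsto (fun x : ℝ => -lam * x) Filter.atTop Filter.atBot := by
      apply Filter.Tendsto.const_mul_atTop_of_neg (by linarith) Filter.tendsto_id
    have h2 : Filter.Tendsto (fun x : ℝ => Real.exp (-lam * x)) Filter.atTop (nhds 0) :=
      Real.tendsto_exp_atBot.comp h1
    have h3 : Filter.Tendsto (fun x : ℝ => -(lam * Real.exp (-lam * x))) Filter.atTop
        (nhds 0) := by
      have := (h2.const_mul lam).neg
      simpa using this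
    have h4 := (Real.continuous_exp.tendsto 0).comp h3
    have h5 := h4.const_mul (1 / lam)
    simpa [hF, div_eq_mul_inv] using h5
  have key := integral_Ioi_of_hasDerivAt_of_nonneg (hcont 0 Set.self_mem_Ici) hderiv hnonneg htend
  rw [key]
  simp only [hF]
  rw [show (-lam * 0 : ℝ) = 0 by ring]
  rw [Real.exp_zero]
  ring
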